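/- The assignment ρ with ρ(x)=0, ρ(s)=1, ρ(t)=2, ρ(u)=3, ρ(v)=1 defines a grading on R = K[x,s,t,u,v] such that for any ρ-homogeneous p of ρ-degree i and q of ρ-degree j, their product has ρ-degree i+j; moreover if m is a monomial of ρ-degree n then Dⁿ(m) ≠ 0 and D^{n+1}(m) = 0, where D is the derivation x³·∂/∂s + s·∂/∂t + t·∂/∂u + x²·∂/∂v. -/

import Mathlib

open MvPolynomial

/-- The derivation `D = x³ ∂/∂s + s ∂/∂t + t ∂/∂u + x² ∂/∂v` on `K[x,s,t,u,v]`,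
where `x, s, t, u, v` are `X 0, X 1, X 2, X 3, X 4`. -/
noncomputable def D (K : Type*) [Field K] [CharZero K] :
    Derivation K (MvPolynomial (Fin 5) K) (MvPolynomial (Fin 5) K) :=
  mkDerivation K ![0, X 0 ^ 3, X 1, X 2, X 0 ^ 2]

/-- The ρ-weights: `ρ(x) = 0`, `ρ(s) = 1`, `ρ(t) = 2`, `ρ(u) = 3`, `ρ(v) = 1`. -/
def ρw : Fin 5 → ℕ := ![0, 1, 2, 3, 1]

lemma weight_single (i : Fin 5) : Finsupp.weight ρw (Finsupp.single i 1) = ρw i := by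
  simp [Finsupp.weight_apply, Finsupp.sum_single_index]

lemma hom_X_pow (K : Type*) [Field K] [CharZero K] (i : Fin 5) (n : ℕ) :
    IsWeightedHomogeneous ρw ((X i : MvPolynomial (Fin 5) K) ^ n) (n * ρw i) := by
  rw [X_pow_eq_monomial]
  apply isWeightedHomogeneous_monomial
  simp [Finsupp.weight_apply, Finsupp.sum_single_index, mul_comm]

lemma hom_cast {K : Type*} [Field K] [CharZero K] {p : MvPolynomial (Fin 5) K} {m n : ℕ}
    (h : IsWeightedHomogeneous ρw p m) (e : m = n) : IsWeightedHomogeneous ρw p n := e ▸ h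

/-- D sends ρ-homogeneous elements of degree `k+1` to ρ-homogeneous of degree `k`. -/
lemma D_hom (K : Type*) [Field K] [CharZero K] {k : ℕ} {p : MvPolynomial (Fin 5) K}
    (hp : IsWeightedHomogeneous ρw p (k + 1)) :
    IsWeightedHomogeneous ρw ((D K) p) k := by
  conv_lhs => rw [← p.support_sum_monomial_coeff]
  rw [map_sum]
  apply IsWeightedHomogeneous.sum
  intro d hd
  have hwd : Finsupp.weight ρw d = k + 1 := hp (mem_support_iff.mp hd)
  rw [← mem_weightedHomogeneousSubmodule]
  simp only [D, mkDerivation_monomial]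
  apply Submodule.smul_mem
  rw [Finsupp.sum]
  apply Submodule.sum_mem
  intro i hi
  have hi' : d i ≠ 0 := Finsupp.mem_support_iff.mp hi
  have hsub : d - Finsupp.single i 1 + Finsupp.single i 1 = d := by
    apply tsub_add_cancel_of_le
    rwa [Finsupp.single_le_iff, Nat.one_le_iff_ne_zero]
  have hw : Finsupp.weight ρw (d - Finsupp.single i 1) + ρw i = k + 1 := by
    rw [← weight_single i, ← map_add, hsub, hwd]
  rw [mem_weightedHomogeneousSubmodule, smul_eq_mul]
  have hmono := isWeightedHomogeneous_monomial
    ρw (d - Finsupp.single i 1) ((d i : K)) rfl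
  fin_cases i
  · -- i = 0 : f 0 = 0
    simpa using isWeightedHomogeneous_zero K ρw k
  · -- i = 1 : f 1 = X 0 ^ 3
    refine hom_cast (hmono.mul (hom_X_pow K 0 3)) ?_
    simp [ρw] at hw ⊢
    omega
  · -- i = 2 : f 2 = X 1
    refine hom_cast (hmono.mul (isWeightedHomogeneous_X K ρw 1)) ?_
    simp [ρw] at hw ⊢
    omega
  · -- i = 3 : f 3 = X 2
    refine hom_cast (hmono.mul (isWeightedHomogeneous_X K ρw 2)) ?_
    simp [ρw] at hw ⊢
    omega
  · -- i = 4 : f 4 = X 0 ^ 2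
    refine hom_cast (hmono.mul (hom_X_pow K 0 2)) ?_
    simp [ρw] at hw ⊢
    omega

/-- D kills ρ-homogeneous elements of degree 0. -/
lemma D_zero (K : Type*) [Field K] [CharZero K] {p : MvPolynomial (Fin 5) K}
    (hp : IsWeightedHomogeneous ρw p 0) : (D K) p = 0 := by
  conv_lhs => rw [← p.support_sum_monomial_coeff]
  rw [map_sum]
  apply Finset.sum_eq_zero
  intro d hd
  have hwd : Finsupp.weight ρw d = 0 := hp (mem_support_iff.mp hd)
  simp only [D, mkDerivation_monomial]
  rw [Finsupp.sum, Finset.sum_eq_zero, smul_zero]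
  intro i hi
  have hi' : d i ≠ 0 := Finsupp.mem_support_iff.mp hi
  have hle := Finsupp.le_weight_of_ne_zero' ρw hi'
  rw [hwd] at hle
  have hi0 : i = 0 := by
    by_contra h
    have : ρw i ≠ 0 := by fin_cases i <;> simp_all [ρw]
    omega
  subst hi0
  simp

lemma D_pow_zero (K : Type*) [Field K] [CharZero K] (k : ℕ) :
    ∀ p : MvPolynomial (Fin 5) K, IsWeightedHomogeneous ρw p k →
      ((D K).toLinearMap ^ (k + 1)) p = 0 := by
  induction k with
  | zero => intro p hp; simpa using D_zero K hp
  | succ k ih =>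
      intro p hp
      rw [pow_succ, Module.End.mul_apply]
      exact ih _ (D_hom K hp)

/-- The comparison map to `K[λ]` sending `x ↦ 1, s ↦ λ, t ↦ λ²/2, u ↦ λ³/6, v ↦ λ`. -/
noncomputable def Φ (K : Type*) [Field K] [CharZero K] :
    MvPolynomial (Fin 5) K →ₐ[K] Polynomial K :=
  aeval ![1, Polynomial.X, Polynomial.C (2⁻¹ : K) * Polynomial.X ^ 2,
    Polynomial.C (6⁻¹ : K) * Polynomial.X ^ 3, Polynomial.X]

lemma Phi_D (K : Type*) [Field K] [CharZero K] (p : MvPolynomial (Fin 5) K) :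
    Φ K ((D K) p) = Polynomial.derivative (Φ K p) := by
  induction p using MvPolynomial.induction_on with
  | C a => simp [Φ]
  | add p q hp hq => simp [map_add, hp, hq]
  | mul_X p i hp =>
      have hX : Φ K ((D K) (X i)) = Polynomial.derivative (Φ K (X i)) := by
        fin_cases i <;>
          simp [D, Φ, Polynomial.derivative_C_mul, ← Polynomial.C_mul,
            ← Polynomial.C_eq_natCast] <;>
          · ring_nf
            norm_num [← Polynomial.C_mul]
            all_goals first
              | (rw [mul_right_comm, ← Polynomial.C_ofNat, ← Polynomial.C_mul]; norm_num)
              | (rw [← add_mul, ← Polynomial.C_add]; norm_num)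
      rw [Derivation.leibniz, smul_eq_mul, smul_eq_mul, map_add,
        map_mul, map_mul, map_mul, Polynomial.derivative_mul, hp, hX]
      ring

lemma Phi_D_pow (K : Type*) [Field K] [CharZero K] (n : ℕ) (p : MvPolynomial (Fin 5) K) :
    Φ K (((D K).toLinearMap ^ n) p) = Polynomial.derivative^[n] (Φ K p) := by
  induction n generalizing p with
  | zero => simp
  | succ n ih =>
      rw [pow_succ, Module.End.mul_apply, show ((D K).toLinearMap) p = (D K) p from rfl,
        ih, Phi_D, Function.iterate_succ_apply]

theorem rho_grading (K : Type*) [Field K] [CharZero K] :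
    (∀ (i j : ℕ) (p q : MvPolynomial (Fin 5) K),
      IsWeightedHomogeneous ρw p i → IsWeightedHomogeneous ρw q j →
      IsWeightedHomogeneous ρw (p * q) (i + j)) ∧
    (∀ a b c d e : ℕ,
      ((D K).toLinearMap ^ (b + 2 * c + 3 * d + e))
          (X 0 ^ a * X 1 ^ b * X 2 ^ c * X 3 ^ d * X 4 ^ e) ≠ 0 ∧
      ((D K).toLinearMap ^ (b + 2 * c + 3 * d + e + 1))
          (X 0 ^ a * X 1 ^ b * X 2 ^ c * X 3 ^ d * X 4 ^ e) = 0) := by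
  constructor
  · intro i j p q hp hq
    exact hp.mul hq
  · intro a b c d e
    set n := b + 2 * c + 3 * d + e with hn
    set m : MvPolynomial (Fin 5) K := X 0 ^ a * X 1 ^ b * X 2 ^ c * X 3 ^ d * X 4 ^ e with hm
    have hhom : IsWeightedHomogeneous ρw m n := by
      have := ((((hom_X_pow K 0 a).mul (hom_X_pow K 1 b)).mul (hom_X_pow K 2 c)).mul
        (hom_X_pow K 3 d)).mul (hom_X_pow K 4 e)
      refine hom_cast this ?_
      show a * ρw 0 + b * ρw 1 + c * ρw 2 + d * ρw 3 + e * ρw 4 = n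
      have h0 : ρw 0 = 0 := rfl
      have h1 : ρw 1 = 1 := rfl
      have h2 : ρw 2 = 2 := rfl
      have h3 : ρw 3 = 3 := rfl
      have h4 : ρw 4 = 1 := rfl
      rw [h0, h1, h2, h3, h4, hn]; ring
    refine ⟨?_, D_pow_zero K n m hhom⟩
    -- nonvanishing via Φ
    intro hzero
    have hΦ := Phi_D_pow K n m
    rw [hzero, map_zero] at hΦ
    have hΦm : Φ K m = Polynomial.C ((2⁻¹ : K) ^ c * (6⁻¹ : K) ^ d) * Polynomial.X ^ n := by
      rw [hm]
      simp only [Φ, map_mul, map_pow, aeval_X]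
      simp only [Matrix.cons_val_zero, Matrix.cons_val_one, Matrix.head_cons,
        Matrix.cons_val_two, Matrix.tail_cons, Matrix.cons_val_three, Matrix.cons_val_four]
      rw [hn]
      ring
    rw [hΦm, Polynomial.iterate_derivative_C_mul,
      Polynomial.iterate_derivative_X_pow_eq_C_mul, Nat.sub_self, pow_zero, mul_one,
      ← Polynomial.C_mul] at hΦ
    have := Polynomial.C_eq_zero.mp hΦ.symm
    have h2 : (2⁻¹ : K) ≠ 0 := by norm_num
    have h6 : (6⁻¹ : K) ≠ 0 := by norm_num
    have hdesc : (n.descFactorial n : K) ≠ 0 := by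
      rw [Nat.descFactorial_self]
      exact_mod_cast Nat.cast_ne_zero.mpr (Nat.factorial_ne_zero n)
    exact (mul_ne_zero (mul_ne_zero (pow_ne_zero _ h2) (pow_ne_zero _ h6)) hdesc) this
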